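/- Let T be a positive integer and let τ_1, …, τ_T be natural numbers (delays) satisfying the cumulative budget constraint Σ_{s=1}^T τ_s ≤ Λ for a real number Λ ≥ 0. For every round t ∈ {1, …, T}, the number of invisible feedbacks D_t := |{s ∈ ℕ : 1 ≤ s < t and s + τ_s > t}| satisfies D_t ≤ √(2Λ). -/

import Mathlib

/-- Any finset of distinct naturals has sum at least `0 + 1 + ⋯ + (card - 1)`. -/
lemma sum_range_card_le (A : Finset ℕ) :
    ∑ i ∈ Finset.range A.card, i ≤ ∑ i ∈ A, i := by
  induction A using Finset.strongInduction with
  | _ A ih =>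
    rcases A.eq_empty_or_nonempty with rfl | hA
    · simp
    · set m := A.max' hA with hmdef
      have hm : m ∈ A := A.max'_mem hA
      have hsub : A ⊆ Finset.range (m + 1) := fun x hx =>
        Finset.mem_range.mpr (Nat.lt_succ_of_le (A.le_max' x hx))
      have hcard : A.card ≤ m + 1 := by
        simpa using Finset.card_le_card hsub
      have hApos : 0 < A.card := Finset.card_pos.mpr hA
      have hce : (A.erase m).card = A.card - 1 := Finset.card_erase_of_mem hm
      have hih := ih (A.erase m) (Finset.erase_ssubset hm)
      rw [hce] at hih
      have hsum : ∑ i ∈ A, i = m + ∑ i ∈ A.erase m, i :=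
        (Finset.add_sum_erase _ _ hm).symm
      calc ∑ i ∈ Finset.range A.card, i
          = ∑ i ∈ Finset.range (A.card - 1), i + (A.card - 1) := by
            have h : A.card = A.card - 1 + 1 := by omega
            conv_lhs => rw [h, Finset.sum_range_succ]
        _ ≤ ∑ i ∈ A.erase m, i + m := add_le_add hih (by omega)
        _ = ∑ i ∈ A, i := by rw [hsum, Nat.add_comm]

lemma gauss_aux (n : ℕ) : n * n ≤ 2 * (∑ i ∈ Finset.range n, i) + 2 * n := by
  induction n with
  | zero => simp
  | succ n ih =>
    rw [Finset.sum_range_succ]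
    nlinarith [ih]

/-- **Bound on invisible feedbacks under an adversarial delay budget.**
If the delays `τ 1, …, τ T` satisfy the cumulative budget `∑ τ s ≤ Λ`, then at every
round `t ∈ {1, …, T}` the number of pending (invisible) feedbacks
`D_t = |{s : 1 ≤ s < t, s + τ s > t}|` is at most `√(2Λ)`. -/
theorem invisible_feedback_bound (T : ℕ) (hT : 0 < T) (τ : ℕ → ℕ) (Λ : ℝ) (hΛ : 0 ≤ Λ)
    (hbudget : (∑ s ∈ Finset.Icc 1 T, (τ s : ℝ)) ≤ Λ)
    (t : ℕ) (ht : t ∈ Finset.Icc 1 T) :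
    (((Finset.Ico 1 t).filter (fun s => t < s + τ s)).card : ℝ) ≤ Real.sqrt (2 * Λ) := by
  set S := (Finset.Ico 1 t).filter (fun s => t < s + τ s) with hS
  set D := S.card with hD
  simp only [Finset.mem_Icc] at ht
  -- each pending round has delay at least t - s + 1
  have hmem : ∀ s ∈ S, 1 ≤ s ∧ s < t ∧ t < s + τ s := by
    intro s hs
    simp only [hS, Finset.mem_filter, Finset.mem_Ico] at hs
    tauto
  have hstep1 : ∑ s ∈ S, (t - s + 1) ≤ ∑ s ∈ S, τ s := by
    apply Finset.sum_le_sum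
    intro s hs
    have := hmem s hs
    omega
  -- the values t - s are distinct
  have hinj : Set.InjOn (fun s => t - s) S := by
    intro a ha b hb hab
    have h1 := hmem a ha
    have h2 := hmem b hb
    simp only at hab
    omega
  have himg : (S.image (fun s => t - s)).card = D := Finset.card_image_of_injOn hinj
  have hstep2 : ∑ i ∈ Finset.range D, i + D ≤ ∑ s ∈ S, (t - s + 1) := by
    have : ∑ s ∈ S, (t - s + 1) = ∑ u ∈ S.image (fun s => t - s), (u + 1) := by
      rw [Finset.sum_image (fun a ha b hb h => hinj ha hb h)]
    rw [this, Finset.sum_add_distrib, Finset.sum_const, himg, smul_eq_mul, mul_one]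
    have := sum_range_card_le (S.image (fun s => t - s))
    rw [himg] at this
    omega
  have hgauss : D * D ≤ 2 * ∑ s ∈ S, τ s := by
    calc D * D ≤ 2 * (∑ i ∈ Finset.range D, i) + 2 * D := gauss_aux D
      _ = 2 * (∑ i ∈ Finset.range D, i + D) := by ring
      _ ≤ 2 * ∑ s ∈ S, (t - s + 1) := by omega
      _ ≤ 2 * ∑ s ∈ S, τ s := by omega
  -- the sum over S is at most Λ
  have hsub : S ⊆ Finset.Icc 1 T := by
    intro s hs
    have := hmem s hs
    simp only [Finset.mem_Icc]
    omega
  have hsumle : (∑ s ∈ S, (τ s : ℝ)) ≤ Λ := by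
    refine le_trans ?_ hbudget
    exact Finset.sum_le_sum_of_subset_of_nonneg hsub (by intro i _ _; positivity)
  have hDsq : (D : ℝ) ^ 2 ≤ 2 * Λ := by
    have hcast : ((D * D : ℕ) : ℝ) ≤ ((2 * ∑ s ∈ S, τ s : ℕ) : ℝ) := by exact_mod_cast hgauss
    push_cast at hcast
    nlinarith [hsumle]
  calc (D : ℝ) = Real.sqrt ((D : ℝ) ^ 2) := by
        rw [Real.sqrt_sq (by positivity)]
    _ ≤ Real.sqrt (2 * Λ) := Real.sqrt_le_sqrt hDsq
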